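/- Let T : A → B be a linear map between C*-algebras such that T maps every partial isometry of A to a partial isometry of B, A is generated (in norm) by linear combinations of its partial isometries, and T is continuous. Then T sends orthogonal partial isometries to orthogonal partial isometries. -/

import Mathlib

private lemma pi_expand {R : Type*} [NormedRing R] [StarRing R]
    [NormedAlgebra ℂ R] [StarModule ℂ R]
    (p q : R) (l : ℂ) (hl : starRingEnd ℂ l * l = 1) :
    (p + l • q) * star (p + l • q) * (p + l • q) =
      p * star p * p + l • (q * star q * q)
        + (starRingEnd ℂ l) • (p * star q * p)
        + (p * star q * q + q * star q * p)
        + l • (p * star p * q + q * star p * p)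
        + (l * l) • (q * star p * q) := by
  have hl' : l * starRingEnd ℂ l = 1 := by rw [mul_comm]; exact hl
  simp only [star_add, star_smul, add_mul, mul_add, smul_mul_assoc, mul_smul_comm,
    smul_smul, smul_add, RCLike.star_def]
  rw [hl, hl']
  simp only [one_smul, mul_one]
  abel

private lemma eq_zero_of_triple {R : Type*} [NormedRing R] [StarRing R] [CStarRing R]
    (x : R) (h : x * star x * x = 0) : x = 0 := by
  have h1 : (star x * x) * (star x * x) = 0 := by
    calc (star x * x) * (star x * x) = star x * (x * star x * x) := by
          simp only [mul_assoc]
      _ = 0 := by rw [h, mul_zero]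
  have h2 : star (star x * x) * (star x * x) = 0 := by
    rwa [star_mul, star_star]
  have h3 : star x * x = 0 := (CStarRing.star_mul_self_eq_zero_iff _).mp h2
  exact (CStarRing.star_mul_self_eq_zero_iff _).mp h3

/-- A bounded linear map between C*-algebras, sending partial isometries to
partial isometries, on a C*-algebra whose partial isometries span a norm-dense
subspace, maps orthogonal partial isometries to orthogonal partial isometries. -/
theorem partialIsometry_preserving_maps_orthogonal
    {A B : Type*} [NormedRing A] [StarRing A] [CStarRing A]
    [NormedAlgebra ℂ A] [StarModule ℂ A] [CompleteSpace A]
    [NormedRing B] [StarRing B] [CStarRing B]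
    [NormedAlgebra ℂ B] [StarModule ℂ B] [CompleteSpace B]
    (T : A →L[ℂ] B)
    (hpi : ∀ u : A, u * star u * u = u → T u * star (T u) * T u = T u)
    (hgen : closure ((Submodule.span ℂ {a : A | a * star a * a = a} : Submodule ℂ A) : Set A)
      = Set.univ)
    (u v : A) (hu : u * star u * u = u) (hv : v * star v * v = v)
    (h1 : star u * v = 0) (h2 : u * star v = 0) :
    star (T u) * T v = 0 ∧ T u * star (T v) = 0 := by
  have h3 : star v * u = 0 := by
    have := congrArg star h1; simpa [star_mul] using this
  have h4 : v * star u = 0 := by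
    have := congrArg star h2; simpa [star_mul] using this
  -- `u + l • v` is a partial isometry for unimodular `l`
  have hApi : ∀ l : ℂ, starRingEnd ℂ l * l = 1 →
      (u + l • v) * star (u + l • v) * (u + l • v) = u + l • v := by
    intro l hl
    rw [pi_expand u v l hl, hu, hv]
    rw [show u * star v * u = 0 by rw [h2, zero_mul]]
    rw [show u * star v * v = 0 by rw [h2, zero_mul]]
    rw [show v * star v * u = 0 by rw [mul_assoc, h3, mul_zero]]
    rw [show u * star u * v = 0 by rw [mul_assoc, h1, mul_zero]]
    rw [show v * star u * u = 0 by rw [h4, zero_mul]]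
    rw [show v * star u * v = 0 by rw [h4, zero_mul]]
    simp
  have hp : T u * star (T u) * T u = T u := hpi u hu
  have hq : T v * star (T v) * T v = T v := hpi v hv
  set p := T u
  set q := T v
  have key : ∀ l : ℂ, starRingEnd ℂ l * l = 1 →
      (starRingEnd ℂ l) • (p * star q * p) + (p * star q * q + q * star q * p)
        + l • (p * star p * q + q * star p * p) + (l * l) • (q * star p * q) = 0 := by
    intro l hl
    have h := hpi (u + l • v) (hApi l hl)
    rw [map_add, map_smul] at h
    rw [pi_expand p q l hl, hp, hq] at h
    rw [show (starRingEnd ℂ l) • (p * star q * p) + (p * star q * q + q * star q * p)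
        + l • (p * star p * q + q * star p * p) + (l * l) • (q * star p * q)
        = (p + l • q + (starRingEnd ℂ l) • (p * star q * p)
            + (p * star q * q + q * star q * p)
            + l • (p * star p * q + q * star p * p) + (l * l) • (q * star p * q))
          - (p + l • q) by module, h]
    exact sub_self _
  have k1 := key 1 (by norm_num)
  have k2 := key (-1) (by norm_num)
  have k3 := key Complex.I (by simp)
  have k4 := key (-Complex.I) (by simp)
  rw [map_one, one_mul] at k1
  rw [map_neg, map_one, neg_mul_neg, one_mul] at k2
  rw [Complex.conj_I, Complex.I_mul_I] at k3
  rw [map_neg, Complex.conj_I, neg_neg, neg_mul_neg, Complex.I_mul_I] at k4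
  set a := p * star q * p with ha'
  set b := p * star q * q + q * star q * p with hb'
  set c := p * star p * q + q * star p * p with hc'
  set d := q * star p * q with hd'
  -- k1 : 1•a + b + 1•c + 1•d = 0
  -- k2 : (-1)•a + b + (-1)•c + 1•d = 0
  -- k3 : (-I)•a + b + I•c + (-1)•d = 0
  -- k4 : I•a + b + (-I)•c + (-1)•d = 0
  have e12 : (2:ℂ) • b + (2:ℂ) • d = 0 := by
    rw [show (2:ℂ) • b + (2:ℂ) • d =
      ((1:ℂ) • a + b + (1:ℂ) • c + (1:ℂ) • d)
        + ((-1:ℂ) • a + b + (-1:ℂ) • c + (1:ℂ) • d) by module]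
    rw [k1, k2]; simp
  have e34 : (2:ℂ) • b - (2:ℂ) • d = 0 := by
    rw [show (2:ℂ) • b - (2:ℂ) • d =
      ((-Complex.I) • a + b + Complex.I • c + (-1:ℂ) • d)
        + (Complex.I • a + b + (-Complex.I) • c + (-1:ℂ) • d) by module]
    rw [k3, k4]; simp
  have hb : b = 0 := by
    have h4b : (4:ℂ) • b = 0 := by
      rw [show (4:ℂ) • b = ((2:ℂ) • b + (2:ℂ) • d) + ((2:ℂ) • b - (2:ℂ) • d) by module,
        e12, e34, add_zero]
    exact (smul_eq_zero.mp h4b).resolve_left (by norm_num)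
  have hd : d = 0 := by
    have h4d : (4:ℂ) • d = 0 := by
      rw [show (4:ℂ) • d = ((2:ℂ) • b + (2:ℂ) • d) - ((2:ℂ) • b - (2:ℂ) • d) by module,
        e12, e34, sub_zero]
    exact (smul_eq_zero.mp h4d).resolve_left (by norm_num)
  have hca : c = a := by
    have h34 : ((2:ℂ) * Complex.I) • (c - a) = 0 := by
      rw [show ((2:ℂ) * Complex.I) • (c - a) =
        ((-Complex.I) • a + b + Complex.I • c + (-1:ℂ) • d)
          - (Complex.I • a + b + (-Complex.I) • c + (-1:ℂ) • d) by module]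
      rw [k3, k4, sub_zero]
    exact sub_eq_zero.mp ((smul_eq_zero.mp h34).resolve_left
      (mul_ne_zero two_ne_zero Complex.I_ne_zero))
  have ha : a = 0 := by
    have h2a : (2:ℂ) • a = 0 := by
      have hk := k1
      rw [hca, hb, hd] at hk
      rw [show (2:ℂ) • a = (1:ℂ) • a + 0 + (1:ℂ) • a + (1:ℂ) • (0:B) by module]
      exact hk
    exact (smul_eq_zero.mp h2a).resolve_left (by norm_num)
  -- unfold the abbreviations into usable product identities
  have hb1 : p * star q * q = -(q * star q * p) :=
    eq_neg_of_add_eq_zero_left (hb' ▸ hb)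
  have hb2 : q * star q * p = -(p * star q * q) :=
    eq_neg_of_add_eq_zero_right (hb' ▸ hb)
  have ha0 : p * star q * p = 0 := ha' ▸ ha
  have hd0 : q * star p * q = 0 := hd' ▸ hd
  have hc0 : p * star p * q + q * star p * p = 0 := hc' ▸ (hca.trans ha)
  have hc1 : star p * (p * star q) = -(star q * (p * star p)) := by
    have := congrArg star hc0
    simp only [star_add, star_mul, star_star, star_zero] at this
    exact eq_neg_of_add_eq_zero_right this
  constructor
  · -- star p * q = 0
    apply eq_zero_of_triple
    calc star p * q * star (star p * q) * (star p * q)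
        = star p * ((q * star q * p) * (star p * q)) := by
          simp only [star_mul, star_star, mul_assoc]
      _ = star p * ((-(p * star q * q)) * (star p * q)) := by rw [hb2]
      _ = -(star p * p * (star q * (q * star p * q))) := by
          simp only [neg_mul, mul_neg, mul_assoc]
      _ = 0 := by rw [hd0]; simp
  · -- p * star q = 0
    apply eq_zero_of_triple
    calc p * star q * star (p * star q) * (p * star q)
        = (p * star q * q) * (star p * (p * star q)) := by
          simp only [star_mul, star_star, mul_assoc]
      _ = (-(q * star q * p)) * (-(star q * (p * star p))) := by rw [hb1, hc1]
      _ = q * star q * ((p * star q * p) * star p) := by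
          simp only [neg_mul_neg, mul_assoc]
      _ = 0 := by rw [ha0]; simp
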